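/- If θ₁ = θ₂ = ⋯ = θ_N = θ, the Poisson-Binomial PMF reduces to the Binomial PMF: (1/(N+1)) Σ_{ℓ=0}^N c^{-ℓm}[1 + (c^ℓ - 1)θ]^N = C(N,m) θ^m (1-θ)^{N-m}, for all m ∈ {0,…,N}, where c = exp(2πi/(N+1)). -/

import Mathlib

/-- With uniform `θ`, the Poisson-Binomial DFT formula reduces to the Binomial PMF:
`(1/(N+1)) ∑_{ℓ=0}^N c^{-ℓm}[1+(c^ℓ-1)θ]^N = C(N,m) θ^m (1-θ)^{N-m}`. -/
theorem poisson_binomial_reduces_to_binomial (N : ℕ) (hN : 1 ≤ N)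
    (θ : ℝ) (hθ : θ ∈ Set.Icc (0:ℝ) 1) (m : ℕ) (hm : m ≤ N)
    (c : ℂ) (hc : c = Complex.exp (2 * (Real.pi : ℂ) * Complex.I / ((N : ℂ) + 1))) :
    (1 / ((N : ℂ) + 1)) * ∑ ℓ ∈ Finset.range (N + 1),
        (c ^ (ℓ * m))⁻¹ * (1 + (c ^ ℓ - 1) * (θ : ℂ)) ^ N =
      (N.choose m : ℂ) * (θ : ℂ) ^ m * (1 - (θ : ℂ)) ^ (N - m) := by
  have hprim : IsPrimitiveRoot c (N + 1) := by
    rw [hc]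
    have := Complex.isPrimitiveRoot_exp (N + 1) (Nat.succ_ne_zero N)
    simpa [Nat.cast_add, Nat.cast_one] using this
  have hc0 : c ≠ 0 := hprim.ne_zero (Nat.succ_ne_zero N)
  have hcpow : c ^ (N + 1) = 1 := hprim.pow_eq_one
  have key : ∀ ℓ ∈ Finset.range (N+1),
      (c ^ (ℓ * m))⁻¹ * (1 + (c ^ ℓ - 1) * (θ : ℂ)) ^ N
      = ∑ k ∈ Finset.range (N+1),
          (N.choose k : ℂ) * (θ:ℂ)^k * (1 - (θ:ℂ))^(N-k) * (c ^ k / c ^ m) ^ ℓ := by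
    intro ℓ _
    have h1 : (1 + (c ^ ℓ - 1) * (θ : ℂ)) = (θ:ℂ) * c ^ ℓ + (1 - θ) := by ring
    rw [h1, add_pow, Finset.mul_sum]
    refine Finset.sum_congr rfl fun k hk => ?_
    rw [div_pow, ← pow_mul, ← pow_mul, mul_pow, ← pow_mul]
    rw [mul_comm k ℓ, mul_comm m ℓ]
    field_simp
  rw [Finset.sum_congr rfl key, Finset.sum_comm]
  have hsum : ∀ k ∈ Finset.range (N+1),
      (∑ ℓ ∈ Finset.range (N+1),
        (N.choose k : ℂ) * (θ:ℂ)^k * (1 - (θ:ℂ))^(N-k) * (c ^ k / c ^ m) ^ ℓ)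
      = if k = m then ((N:ℂ)+1) * ((N.choose m : ℂ) * (θ:ℂ)^m * (1 - (θ:ℂ))^(N-m)) else 0 := by
    intro k hk
    rw [← Finset.mul_sum]
    by_cases hkm : k = m
    · subst hkm
      simp [div_self (pow_ne_zero k hc0)]
      push_cast
      ring
    · rw [if_neg hkm]
      have hz1 : c ^ k / c ^ m ≠ 1 := by
        intro h
        apply hkm
        have : c ^ k = c ^ m := by
          field_simp at h; exact h
        exact hprim.pow_inj (Finset.mem_range.mp hk) (by omega) this
      have hzn : (c ^ k / c ^ m) ^ (N+1) = 1 := by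
        rw [div_pow, ← pow_mul, ← pow_mul, mul_comm k (N+1), mul_comm m (N+1),
          pow_mul, pow_mul, hcpow, one_pow, one_pow, div_one]
      rw [geom_sum_eq hz1, hzn]
      simp
  rw [Finset.sum_congr rfl hsum, Finset.sum_ite_eq' (Finset.range (N+1)) m,
    if_pos (Finset.mem_range.mpr (by omega))]
  have hne : ((N:ℂ) + 1) ≠ 0 := Nat.cast_add_one_ne_zero N
  field_simp
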